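/- Let p ∈ 𝔽₂[x] be primitive of degree m ≥ 1, written p = x^m − c_1 x^{m−1} − ⋯ − c_m, and let a : ℕ → 𝔽₂ satisfy a_{i+m} = c_1 a_{i+m−1} + ⋯ + c_m a_i for all i ≥ 0 with (a_0, …, a_{m−1}) ≠ (0, …, 0). Let σ ≥ 1 be an integer with gcd(σ, 2^m − 1) = 1. Then the decimated sequence b_i := a_{σ i} is purely periodic with minimal period exactly 2^m − 1. -/

import Mathlib

open Polynomial

/-- A polynomial `p ∈ 𝔽₂[x]` of degree `m` is primitive if it is irreducible and
the residue class of `x` in `𝔽₂[x]/(p)` has multiplicative order `2^m - 1`. -/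
def IsPrimitivePoly (p : Polynomial (ZMod 2)) : Prop :=
  Irreducible p ∧ orderOf (AdjoinRoot.root p) = 2 ^ p.natDegree - 1

/-- Decimating a maximal-period linear recurring sequence over `𝔽₂` by a step
size `σ` coprime to `2^m - 1` again yields a purely periodic sequence with
minimal period exactly `2^m - 1`. -/
theorem lfsr_decimation_minimal_period (m : ℕ) (hm : 1 ≤ m) (c : ℕ → ZMod 2)
    (p : Polynomial (ZMod 2))
    (hp : p = X ^ m - ∑ j ∈ Finset.Icc 1 m, C (c j) * X ^ (m - j))
    (hprim : IsPrimitivePoly p)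
    (a : ℕ → ZMod 2)
    (ha : ∀ i, a (i + m) = ∑ j ∈ Finset.Icc 1 m, c j * a (i + m - j))
    (ha0 : ∃ k, k < m ∧ a k ≠ 0)
    (σ : ℕ) (hσ : 1 ≤ σ) (hgcd : Nat.gcd σ (2 ^ m - 1) = 1)
    (b : ℕ → ZMod 2) (hb : ∀ i, b i = a (σ * i)) :
    IsLeast {T : ℕ | 0 < T ∧ ∀ i, b (i + T) = b i} (2 ^ m - 1) := by
  classical
  obtain ⟨hirr, hord0⟩ := hprim
  haveI := Fact.mk hirr
  set N := 2 ^ m - 1 with hNdef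
  have h2m : 2 ≤ 2 ^ m := by
    calc (2 : ℕ) = 2 ^ 1 := (pow_one 2).symm
    _ ≤ 2 ^ m := Nat.pow_le_pow_right (by norm_num) hm
  have hN1 : 1 ≤ N := by omega
  have hp0 : p ≠ 0 := hirr.ne_zero
  -- the degree of `p` is `m`
  have hdeg : p.natDegree = m := by
    rw [hp]
    have h1 : (∑ j ∈ Finset.Icc 1 m, C (c j) * X ^ (m - j) :
        Polynomial (ZMod 2)).natDegree < (X ^ m : Polynomial (ZMod 2)).natDegree := by
      rw [natDegree_X_pow]
      refine lt_of_le_of_lt (Polynomial.natDegree_sum_le_of_forall_le _ _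
        (fun j hj => ?_)) (show m - 1 < m by omega)
      obtain ⟨hj1, hj2⟩ := Finset.mem_Icc.mp hj
      refine le_trans (natDegree_C_mul_le _ _) ?_
      rw [natDegree_X_pow]; omega
    rw [natDegree_sub_eq_left_of_natDegree_lt h1, natDegree_X_pow]
  set α := AdjoinRoot.root p with hα
  have hordα : orderOf α = N := by rw [hord0, hdeg]
  -- the power basis
  set pb := AdjoinRoot.powerBasis hp0 with hpb
  have hdim : pb.dim = m := by rw [hpb, AdjoinRoot.powerBasis_dim, hdeg]
  haveI : Module.Finite (ZMod 2) (AdjoinRoot p) := pb.finite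
  haveI : Finite (AdjoinRoot p) := Module.finite_of_finite (ZMod 2)
  haveI : Fintype (AdjoinRoot p) := Fintype.ofFinite _
  -- the recurrence satisfied by `α`
  have hroot : α ^ m = ∑ j ∈ Finset.Icc 1 m, c j • α ^ (m - j) := by
    have h0 : aeval α (X ^ m - ∑ j ∈ Finset.Icc 1 m, C (c j) * X ^ (m - j)) = 0 := by
      rw [← hp, aeval_def, AdjoinRoot.algebraMap_eq]
      exact AdjoinRoot.eval₂_root p
    simp only [map_sub, map_pow, aeval_X, map_sum, map_mul, aeval_C] at h0
    rw [sub_eq_zero] at h0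
    exact h0.trans (Finset.sum_congr rfl fun j _ => (Algebra.smul_def _ _).symm)
  -- a nonzero linear functional
  set i0 : Fin pb.dim := ⟨0, by omega⟩ with hi0
  set φ : AdjoinRoot p →ₗ[ZMod 2] ZMod 2 := pb.basis.coord i0 with hφ
  have hφ1 : φ (pb.basis i0) = 1 := by
    rw [hφ, Module.Basis.coord_apply, Module.Basis.repr_self, Finsupp.single_eq_same]
  have haux : ∀ δ : AdjoinRoot p, (∀ x, φ (δ * x) = 0) → δ = 0 := by
    intro δ h
    by_contra hδ
    have h1 := h (δ⁻¹ * pb.basis i0)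
    rw [← mul_assoc, mul_inv_cancel₀ hδ, one_mul, hφ1] at h1
    exact one_ne_zero h1
  -- the evaluation map β ↦ (φ (β α^k))_{k<m}
  set L : AdjoinRoot p →ₗ[ZMod 2] (Fin m → ZMod 2) :=
    LinearMap.pi (fun k : Fin m => φ ∘ₗ LinearMap.mulRight (ZMod 2) (α ^ (k : ℕ))) with hL
  have hLapp : ∀ β k, L β k = φ (β * α ^ (k : ℕ)) := by
    intro β k; simp [hL, LinearMap.mulRight_apply]
  have hLinj : Function.Injective L := by
    rw [← LinearMap.ker_eq_bot, LinearMap.ker_eq_bot']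
    intro β hβ
    refine haux β ?_
    have hz : (φ ∘ₗ LinearMap.mulRight (ZMod 2) β) = 0 := by
      apply pb.basis.ext
      intro i
      have hgen : pb.gen = α := AdjoinRoot.powerBasis_gen hp0
      have hb2 : pb.basis i = α ^ (i : ℕ) := by
        rw [pb.basis_eq_pow i, hgen]
      have := congrFun hβ ⟨(i : ℕ), by omega⟩
      rw [hLapp] at this
      simp only [LinearMap.comp_apply, LinearMap.mulRight_apply, LinearMap.zero_apply, hb2]
      rw [mul_comm]
      exact this
    intro x
    have h2 := LinearMap.ext_iff.mp hz x
    simpa [LinearMap.mulRight_apply, mul_comm] using h2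
  have hfr1 : Module.finrank (ZMod 2) (AdjoinRoot p) = m := by
    rw [pb.finrank, hdim]
  have hfr2 : Module.finrank (ZMod 2) (Fin m → ZMod 2) = m := Module.finrank_fin_fun _
  have hLsurj : Function.Surjective L :=
    (LinearMap.injective_iff_surjective_of_finrank_eq_finrank
      (by rw [hfr1, hfr2])).mp hLinj
  obtain ⟨β, hβ⟩ := hLsurj (fun k : Fin m => a (k : ℕ))
  have hβk : ∀ k : Fin m, φ (β * α ^ (k : ℕ)) = a (k : ℕ) := by
    intro k
    rw [← hLapp, hβ]
  have hβ0 : β ≠ 0 := by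
    obtain ⟨k, hk, hak⟩ := ha0
    intro h
    apply hak
    rw [← hβk ⟨k, hk⟩, h, zero_mul, map_zero]
  -- the trace-like representation of `a`
  have key : ∀ n, a n = φ (β * α ^ n) := by
    intro n
    induction n using Nat.strong_induction_on with
    | _ n ih =>
      rcases Nat.lt_or_ge n m with h | h
      · exact (hβk ⟨n, h⟩).symm
      · obtain ⟨i, rfl⟩ : ∃ i, n = i + m := ⟨n - m, by omega⟩
        rw [ha i]
        have hα2 : β * α ^ (i + m) = ∑ j ∈ Finset.Icc 1 m, c j • (β * α ^ (i + m - j)) := by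
          rw [pow_add, ← mul_assoc, mul_comm (β * α ^ i) (α ^ m), hroot, Finset.sum_mul]
          refine Finset.sum_congr rfl fun j hj => ?_
          obtain ⟨hj1, hj2⟩ := Finset.mem_Icc.mp hj
          rw [smul_mul_assoc]
          congr 1
          rw [mul_comm, mul_assoc, ← pow_add]
          congr 2
          omega
        rw [hα2, map_sum]
        refine Finset.sum_congr rfl fun j hj => ?_
        obtain ⟨hj1, hj2⟩ := Finset.mem_Icc.mp hj
        rw [map_smul, smul_eq_mul, ih (i + m - j) (by omega)]
  -- the decimated generator
  set γ := α ^ σ with hγ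
  have hordγ : orderOf γ = N := by
    rw [hγ, orderOf_pow' _ (by omega : σ ≠ 0), hordα, Nat.gcd_comm, hgcd, Nat.div_one]
  have hγN : γ ^ N = 1 := by rw [← hordγ]; exact pow_orderOf_eq_one γ
  have hγ0 : γ ≠ 0 := by
    intro h
    rw [h, zero_pow (by omega)] at hγN
    exact zero_ne_one hγN
  have hbφ : ∀ i, b i = φ (β * γ ^ i) := by
    intro i
    rw [hb, key, hγ, pow_mul]
  constructor
  · refine ⟨by omega, fun i => ?_⟩
    rw [hbφ, hbφ, pow_add, hγN, mul_one]
  · rintro T ⟨hT0, hTper⟩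
    -- every nonzero element is a power of γ
    have hcard : Nat.card (AdjoinRoot p) = 2 ^ m := by
      rw [Nat.card_eq_fintype_card, Module.card_eq_pow_finrank (K := ZMod 2), ZMod.card, hfr1]
    set u : (AdjoinRoot p)ˣ := Units.mk0 γ hγ0 with hu
    have hordu : orderOf u = N := by
      rw [← orderOf_units, hu, Units.val_mk0, hordγ]
    have hgen : ∀ x : AdjoinRoot p, x ≠ 0 → ∃ i : ℕ, γ ^ i = x := by
      intro x hx
      have htop : Subgroup.zpowers u = ⊤ := by
        apply Subgroup.eq_top_of_card_eq
        rw [Nat.card_zpowers, hordu, Nat.card_units, hcard]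
      have hmem : Units.mk0 x hx ∈ Subgroup.zpowers u := htop ▸ Subgroup.mem_top _
      rw [← mem_powers_iff_mem_zpowers] at hmem
      obtain ⟨i, hi⟩ := hmem
      refine ⟨i, ?_⟩
      have h3 := congrArg Units.val hi
      simpa [hu] using h3
    have hδz : ∀ x, φ ((β * γ ^ T - β) * x) = 0 := by
      intro x
      rcases eq_or_ne x 0 with rfl | hx
      · rw [mul_zero, map_zero]
      · obtain ⟨i, rfl⟩ := hgen x hx
        have h1 : (β * γ ^ T - β) * γ ^ i = β * γ ^ (i + T) - β * γ ^ i := by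
          rw [sub_mul, mul_assoc, ← pow_add, add_comm T i]
        rw [h1, map_sub, ← hbφ, ← hbφ, hTper, sub_self]
    have hδ0 : β * γ ^ T - β = 0 := haux _ hδz
    have hγT : γ ^ T = 1 := by
      have : β * γ ^ T = β * 1 := by rw [mul_one]; exact sub_eq_zero.mp hδ0
      exact mul_left_cancel₀ hβ0 this
    have hdvd : N ∣ T := hordγ ▸ orderOf_dvd_of_pow_eq_one hγT
    exact Nat.le_of_dvd hT0 hdvd
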